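/- Let G be a just infinite group, let p be a prime and n ≥ 1 an integer, and suppose G contains an element of order p^n. Then for every weakly maximal subgroup H of G, the set of conjugates {g H g⁻¹ : g ∈ G} contains at least p^n distinct subgroups. -/

import Mathlib

/-- A group is just infinite if every nontrivial normal subgroup has finite index. -/
def IsJustInfinite (G : Type*) [Group G] : Prop :=
  ∀ N : Subgroup G, N.Normal → N ≠ ⊥ → N.index ≠ 0

/-- A subgroup `H` of a group `G` is weakly maximal if it has infinite index and every
subgroup strictly containing it has finite index. -/
def IsWeaklyMaximal {G : Type*} [Group G] (H : Subgroup G) : Prop :=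
  H.index = 0 ∧ ∀ M : Subgroup G, H < M → M.index ≠ 0

section Aux
variable {G : Type*} [Group G]

lemma aux_relindex_sup_finite (A B : Subgroup G) [A.Normal] [Finite B] :
    A.relIndex (A ⊔ B) ≠ 0 := by
  rw [Subgroup.relIndex_sup_left]
  have : Finite (B ⧸ A.subgroupOf B) := Quotient.finite _
  exact Subgroup.index_ne_zero_of_finite

lemma aux_relindex_sup_zpowers (K : Subgroup G) (x : G) (hx : x ∈ Subgroup.normalizer (K : Set G))
    (hfin : IsOfFinOrder x) : K.relIndex (K ⊔ Subgroup.zpowers x) ≠ 0 := by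
  have hKL : K ≤ Subgroup.normalizer (K : Set G) := Subgroup.le_normalizer
  have hxL : Subgroup.zpowers x ≤ Subgroup.normalizer (K : Set G) := Subgroup.zpowers_le.2 hx
  have hsup : K ⊔ Subgroup.zpowers x ≤ Subgroup.normalizer (K : Set G) := sup_le hKL hxL
  rw [← Subgroup.relIndex_subgroupOf hsup, Subgroup.subgroupOf_sup hKL hxL]
  have hf : Finite ((Subgroup.zpowers x).subgroupOf (Subgroup.normalizer (K : Set G))) := by
    have : Finite (Subgroup.zpowers x) := hfin.finite_zpowers.to_subtype
    exact Finite.of_injective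
      (fun y => (⟨(y : Subgroup.normalizer (K : Set G)), y.2⟩ : Subgroup.zpowers x))
      (by rintro ⟨⟨a, _⟩, _⟩ ⟨⟨c, _⟩, _⟩ h; simpa using congrArg Subtype.val h)
  exact aux_relindex_sup_finite _ _

end Aux

theorem conjugacy_class_card_ge {G : Type*} [Group G] (hG : IsJustInfinite G)
    (p n : ℕ) (hp : p.Prime) (hn : 1 ≤ n) (γ : G) (hγ : orderOf γ = p ^ n)
    (H : Subgroup G) (hH : IsWeaklyMaximal H) :
    ∃ f : Fin (p ^ n) → Subgroup G, Function.Injective f ∧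
      ∀ i, ∃ g : G, f i = Subgroup.map (MulAut.conj g).toMonoidHom H := by
  obtain ⟨hidx, hwm⟩ := hH
  have hppos : 1 < p := hp.one_lt
  have hpn_pos : 0 < p ^ n := Nat.pow_pos (by omega)
  -- composition of conjugation maps
  have hcomp : ∀ (u v : G) (S : Subgroup G),
      Subgroup.map (MulAut.conj u).toMonoidHom
        (Subgroup.map (MulAut.conj v).toMonoidHom S) =
      Subgroup.map (MulAut.conj (u * v)).toMonoidHom S := by
    intro u v S
    rw [Subgroup.map_map]
    congr 1
    ext y; simp [mul_assoc]
  have hmemconj : ∀ (w y : G) (S : Subgroup G),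
      y ∈ Subgroup.map (MulAut.conj w).toMonoidHom S ↔ w⁻¹ * y * w ∈ S := by
    intro w y S
    rw [Subgroup.mem_map_equiv, MulAut.conj_symm_apply]
  -- the normal core of H is trivial
  have hcore : H.normalCore = ⊥ := by
    by_contra hne
    have h0 : H.normalCore.index = 0 := by
      have := Subgroup.relIndex_mul_index (H := H.normalCore) (K := H) H.normalCore_le
      rw [hidx, mul_zero] at this
      exact this.symm
    exact hG H.normalCore inferInstance hne h0
  -- the element z
  set z : G := γ ^ (p ^ (n - 1)) with hz_def
  have hz : z ≠ 1 := by
    intro h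
    have hdvd : p ^ n ∣ p ^ (n - 1) := hγ ▸ orderOf_dvd_of_pow_eq_one h
    have h1 := (Nat.pow_dvd_pow_iff_le_right hppos).1 hdvd
    omega
  -- find a conjugate K of H not containing z
  have hnotall : ¬ ∀ c : G, c * z * c⁻¹ ∈ H := by
    intro h
    have : z ∈ H.normalCore := h
    rw [hcore] at this
    exact hz this
  push_neg at hnotall
  obtain ⟨c, hc⟩ := hnotall
  set K : Subgroup G := Subgroup.map (MulAut.conj c⁻¹).toMonoidHom H with hK_def
  have memK : ∀ y : G, y ∈ K ↔ c * y * c⁻¹ ∈ H := by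
    intro y
    rw [hK_def, hmemconj]
    simp
  have hzK : z ∉ K := fun h => hc ((memK z).1 h)
  -- index facts transfer to conjugates
  have hconj_idx : ∀ (g : G) (S : Subgroup G),
      (Subgroup.map (MulAut.conj g).toMonoidHom S).index = S.index := by
    intro g S
    refine Subgroup.index_map_eq S (MulAut.conj g).surjective ?_
    intro y hy
    have : y = 1 := (MulAut.conj g).injective (by simpa using hy)
    rw [this]; exact S.one_mem
  have hKidx : K.index = 0 := by rw [hK_def, hconj_idx, hidx]
  have hKwm : ∀ M : Subgroup G, K < M → M.index ≠ 0 := by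
    intro M hM
    have hinj := (MulAut.conj c).injective
    have hlt : Subgroup.map (MulAut.conj c).toMonoidHom K <
        Subgroup.map (MulAut.conj c).toMonoidHom M := by
      rw [lt_iff_le_not_ge, Subgroup.map_le_map_iff_of_injective hinj,
        Subgroup.map_le_map_iff_of_injective hinj, ← lt_iff_le_not_ge]
      exact hM
    have hKH : Subgroup.map (MulAut.conj c).toMonoidHom K = H := by
      rw [hK_def, hcomp, mul_inv_cancel]
      ext y; simp
    rw [hKH] at hlt
    have := hwm _ hlt
    rwa [hconj_idx] at this
  -- key lemma A
  have keyA : ∀ x : G, IsOfFinOrder x → x ∈ Subgroup.normalizer (K : Set G) → x ∈ K := by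
    intro x hfin hx
    by_contra hxK
    have hlt : K < K ⊔ Subgroup.zpowers x :=
      lt_of_le_of_ne le_sup_left
        (fun h => hxK (h ▸ Subgroup.mem_sup_right (Subgroup.mem_zpowers x)))
    have hMidx := hKwm _ hlt
    have hmul := Subgroup.relIndex_mul_index (H := K) (K := K ⊔ Subgroup.zpowers x) le_sup_left
    rw [hKidx] at hmul
    rcases Nat.mul_eq_zero.1 hmul with h | h
    · exact aux_relindex_sup_zpowers K x hx hfin h
    · exact hMidx h
  -- key lemma B
  have keyB : ∀ k : ℕ, k ≠ 0 → k < p ^ n → γ ^ k ∈ K → z ∈ K := by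
    intro k hk0 hklt hmem
    set d : ℕ := Nat.gcd k (p ^ n) with hd_def
    have hd_dvd : d ∣ p ^ n := Nat.gcd_dvd_right _ _
    have hd_ne : d ≠ p ^ n := by
      have : d ≤ k := Nat.le_of_dvd (Nat.pos_of_ne_zero hk0) (Nat.gcd_dvd_left _ _)
      omega
    obtain ⟨m, hm_le, hm⟩ := (Nat.dvd_prime_pow hp).1 hd_dvd
    have hm_lt : m < n := by
      rcases Nat.lt_or_ge m n with h | h
      · exact h
      · exact absurd (hm.trans (congrArg (p ^ ·) (Nat.le_antisymm hm_le h))) hd_ne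
    have hγd : γ ^ d ∈ K := by
      have hbez := Nat.gcd_eq_gcd_ab k (p ^ n)
      have heq : (γ : G) ^ (d : ℤ) = (γ ^ (k : ℤ)) ^ Nat.gcdA k (p ^ n) *
          (γ ^ ((p ^ n : ℕ) : ℤ)) ^ Nat.gcdB k (p ^ n) := by
        rw [← zpow_mul, ← zpow_mul, ← zpow_add, ← hbez]
      have hpn1 : γ ^ ((p ^ n : ℕ) : ℤ) = 1 := by
        rw [zpow_natCast, ← hγ, pow_orderOf_eq_one]
      rw [hpn1, one_zpow, mul_one] at heq
      have hz2 : γ ^ (d : ℤ) ∈ K := by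
        rw [heq]
        exact Subgroup.zpow_mem K (by rw [zpow_natCast]; exact hmem) _
      rwa [zpow_natCast] at hz2
    have hexp : m + (n - 1 - m) = n - 1 := by omega
    have hzeq : z = (γ ^ d) ^ (p ^ (n - 1 - m)) := by
      rw [hz_def, hm, ← pow_mul, ← pow_add, hexp]
    rw [hzeq]
    exact pow_mem hγd _
  have hγfin : IsOfFinOrder γ := by
    rw [← orderOf_pos_iff, hγ]; exact hpn_pos
  refine ⟨fun i => Subgroup.map (MulAut.conj (γ ^ (i : ℕ) * c⁻¹)).toMonoidHom H, ?_, ?_⟩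
  · have key : ∀ a b : Fin (p ^ n), b ≤ a →
        Subgroup.map (MulAut.conj (γ ^ (a : ℕ) * c⁻¹)).toMonoidHom H =
        Subgroup.map (MulAut.conj (γ ^ (b : ℕ) * c⁻¹)).toMonoidHom H → a = b := by
      intro a b hba hfab
      set w : G := γ ^ ((a : ℕ) - (b : ℕ)) with hw_def
      have hKK : Subgroup.map (MulAut.conj w).toMonoidHom K = K := by
        have h2 := congrArg
          (Subgroup.map (MulAut.conj ((γ ^ (b : ℕ))⁻¹)).toMonoidHom) hfab
        rw [hcomp, hcomp] at h2
        have e1 : (γ ^ (b : ℕ))⁻¹ * (γ ^ (a : ℕ) * c⁻¹) = w * c⁻¹ := by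
          rw [hw_def, ← mul_assoc]
          congr 1
          have : γ ^ (b : ℕ) * γ ^ ((a : ℕ) - (b : ℕ)) = γ ^ (a : ℕ) := by
            rw [← pow_add]
            congr 1
            omega
          rw [← this]
          group
        have e2 : (γ ^ (b : ℕ))⁻¹ * (γ ^ (b : ℕ) * c⁻¹) = c⁻¹ := by group
        rw [e1, e2] at h2
        rw [hK_def, hcomp]
        exact h2
      have hnorm : w ∈ Subgroup.normalizer (K : Set G) := by
        rw [Subgroup.mem_normalizer_iff]
        intro h
        have h3 : w * h * w⁻¹ ∈ K ↔ h ∈ K := by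
          conv_lhs => rw [← hKK]
          rw [hmemconj]
          have : w⁻¹ * (w * h * w⁻¹) * w = h := by group
          rw [this]
        exact h3.symm
      by_contra hab
      have hne : (a : ℕ) - (b : ℕ) ≠ 0 := by
        have hlt : (b : ℕ) < (a : ℕ) := by
          rcases lt_or_eq_of_le hba with h | h
          · exact h
          · exact absurd (Fin.ext (congrArg Fin.val h)).symm hab
        omega
      have hlt2 : (a : ℕ) - (b : ℕ) < p ^ n := by
        have := a.2; omega
      exact hzK (keyB _ hne hlt2 (keyA _ (hγfin.pow) hnorm))
    intro a b hfab
    rcases le_total b a with h | h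
    · exact key a b h hfab
    · exact (key b a h hfab.symm).symm
  · intro i
    exact ⟨γ ^ (i : ℕ) * c⁻¹, rfl⟩
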